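/- Let g_m denote the m-th moment of the standard normal distribution (g_m = m!/(2^{m/2}(m/2)!) for even m, g_m = 0 for odd m). Then for every integer N ≥ 1 and every integer m ≥ 1, the restricted sum over tuples with all parts strictly less than m satisfies Σ_{k ∈ ℕ^N, k_1+…+k_N = m, k_i ≤ m-1 for all i} (m choose k_1,…,k_N) · g_{k_1}···g_{k_N} = g_m · (N^{m/2} - N). -/

import Mathlib

/-- `g_m`, the `m`-th moment of the standard normal distribution:
`m!/(2^{m/2}(m/2)!)` for even `m` and `0` for odd `m`. -/
noncomputable def gaussianMoment (m : ℕ) : ℝ :=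
  if Even m then (m.factorial : ℝ) / (2 ^ (m / 2) * ((m / 2).factorial : ℝ)) else 0

lemma gaussianMoment_zero : gaussianMoment 0 = 1 := by
  simp [gaussianMoment]

lemma gaussianMoment_odd {m : ℕ} (h : ¬ Even m) : gaussianMoment m = 0 := by
  simp [gaussianMoment, h]

lemma gaussianMoment_two_mul (p : ℕ) :
    gaussianMoment (2 * p) = ((2 * p).factorial : ℝ) / (2 ^ p * (p.factorial : ℝ)) := by
  simp [gaussianMoment, even_two_mul, Nat.mul_div_cancel_left p (by norm_num : 0 < 2)]

/-- Key pointwise identity. -/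
lemma key_identity {p i : ℕ} (hi : i ≤ p) :
    ((2 * p).choose (2 * i) : ℝ) * gaussianMoment (2 * i) * gaussianMoment (2 * (p - i))
      = gaussianMoment (2 * p) * (p.choose i : ℝ) := by
  have h2i : 2 * i ≤ 2 * p := by omega
  rw [gaussianMoment_two_mul, gaussianMoment_two_mul, gaussianMoment_two_mul,
    Nat.cast_choose ℝ h2i, Nat.cast_choose ℝ hi]
  have hsub : 2 * p - 2 * i = 2 * (p - i) := by omega
  rw [hsub]
  have e1 : (2 : ℝ) ^ p = 2 ^ i * 2 ^ (p - i) := by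
    rw [← pow_add]; congr 1; omega
  have f1 : ((2 * i).factorial : ℝ) ≠ 0 := Nat.cast_ne_zero.2 (Nat.factorial_ne_zero _)
  have f2 : ((2 * (p - i)).factorial : ℝ) ≠ 0 := Nat.cast_ne_zero.2 (Nat.factorial_ne_zero _)
  have f3 : (i.factorial : ℝ) ≠ 0 := Nat.cast_ne_zero.2 (Nat.factorial_ne_zero _)
  have f4 : ((p - i).factorial : ℝ) ≠ 0 := Nat.cast_ne_zero.2 (Nat.factorial_ne_zero _)
  have f5 : (p.factorial : ℝ) ≠ 0 := Nat.cast_ne_zero.2 (Nat.factorial_ne_zero _)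
  have f6 : (2 : ℝ) ^ i ≠ 0 := by positivity
  have f7 : (2 : ℝ) ^ (p - i) ≠ 0 := by positivity
  rw [e1]
  field_simp

/-- Sum over even indices only. -/
lemma sum_range_even_eq {p : ℕ} (h : ℕ → ℝ) (hodd : ∀ a, ¬ Even a → h a = 0) :
    ∑ a ∈ Finset.range (2 * p + 1), h a = ∑ i ∈ Finset.range (p + 1), h (2 * i) := by
  rw [← Finset.sum_filter_of_ne (p := fun a => Even a)
    (fun a _ ha => by by_contra hc; exact ha (hodd a hc))]
  refine Finset.sum_nbij' (fun a => a / 2) (fun i => 2 * i) ?_ ?_ ?_ ?_ ?_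
  · intro a ha
    simp only [Finset.mem_filter, Finset.mem_range] at ha ⊢
    omega
  · intro i hi
    simp only [Finset.mem_filter, Finset.mem_range] at hi ⊢
    exact ⟨by omega, even_two_mul i⟩
  · intro a ha
    simp only [Finset.mem_filter, Finset.mem_range] at ha
    obtain ⟨-, k, hk⟩ := ha
    omega
  · intro i hi
    omega
  · intro a ha
    simp only [Finset.mem_filter, Finset.mem_range] at ha
    obtain ⟨-, k, hk⟩ := ha
    congr 1
    omega

/-- The binomial convolution step. -/
lemma binomial_step (N : ℕ) (hN : 1 ≤ N) (m : ℕ) :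
    ∑ x ∈ Finset.HasAntidiagonal.antidiagonal m,
        (m.choose x.1 : ℝ) * gaussianMoment x.1 *
          (gaussianMoment x.2 * (N : ℝ) ^ ((x.2 : ℝ) / 2))
      = gaussianMoment m * ((N : ℝ) + 1) ^ ((m : ℝ) / 2) := by
  have hNpos : (0 : ℝ) < N := by exact_mod_cast hN
  rw [Finset.Nat.sum_antidiagonal_eq_sum_range_succ_mk]
  by_cases hm : Even m
  · obtain ⟨p, hp⟩ := hm
    have hm2 : m = 2 * p := by omega
    subst hm2
    rw [sum_range_even_eq]
    · have hstep : ∀ i ∈ Finset.range (p + 1),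
          ((2 * p).choose (2 * i) : ℝ) * gaussianMoment (2 * i) *
              (gaussianMoment (2 * p - 2 * i) * (N : ℝ) ^ (((2 * p - 2 * i : ℕ) : ℝ) / 2))
            = gaussianMoment (2 * p) * ((p.choose i : ℝ) * (N : ℝ) ^ (p - i) * 1 ^ i) := by
        intro i hi
        have hip : i ≤ p := by simpa using Nat.lt_succ_iff.mp (Finset.mem_range.mp hi)
        have hsub : 2 * p - 2 * i = 2 * (p - i) := by omega
        have hr : (N : ℝ) ^ (((2 * p - 2 * i : ℕ) : ℝ) / 2) = (N : ℝ) ^ (p - i) := by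
          rw [hsub]
          have : ((2 * (p - i) : ℕ) : ℝ) / 2 = ((p - i : ℕ) : ℝ) := by push_cast; ring
          rw [this, Real.rpow_natCast]
        rw [hr, hsub, show ((2*p).choose (2*i) : ℝ) * gaussianMoment (2*i) *
            (gaussianMoment (2*(p-i)) * (N:ℝ)^(p-i)) =
            ((2*p).choose (2*i) : ℝ) * gaussianMoment (2*i) * gaussianMoment (2*(p-i))
              * (N:ℝ)^(p-i) by ring, key_identity hip]
        ring
      rw [Finset.sum_congr rfl hstep, ← Finset.mul_sum]
      have hbin : ∑ i ∈ Finset.range (p + 1),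
          ((p.choose i : ℝ) * (N : ℝ) ^ (p - i) * 1 ^ i) = ((N : ℝ) + 1) ^ p := by
        rw [show ((N : ℝ) + 1) ^ p = ((1 : ℝ) + (N : ℝ)) ^ p by ring, add_pow]
        refine Finset.sum_congr rfl fun i hi => ?_
        ring
      rw [hbin]
      congr 1
      have : ((2 * p : ℕ) : ℝ) / 2 = ((p : ℕ) : ℝ) := by push_cast; ring
      rw [this, Real.rpow_natCast]
    · intro a ha
      rw [gaussianMoment_odd ha]
      ring
  · rw [gaussianMoment_odd hm, zero_mul]
    refine Finset.sum_eq_zero fun a ha => ?_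
    have ham : a ≤ m := by
      have := Finset.mem_range.mp ha; omega
    by_cases hae : Even a
    · have : ¬ Even (m - a) := by
        rcases hae with ⟨k, hk⟩
        rintro ⟨j, hj⟩
        exact hm ⟨k + j, by omega⟩
      rw [gaussianMoment_odd this]
      ring
    · rw [gaussianMoment_odd hae]
      ring

lemma multinomial_cons_univ {N : ℕ} (a : ℕ) (t : Fin N → ℕ) :
    Nat.multinomial Finset.univ (Fin.cons a t : Fin (N + 1) → ℕ)
      = (a + ∑ i, t i).choose a * Nat.multinomial Finset.univ t := by
  rw [Fin.univ_succ, Nat.multinomial_cons]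
  congr 1
  · congr 1
    rw [Finset.sum_map]
    simp [Fin.cons_succ]
  · unfold Nat.multinomial
    rw [Finset.sum_map, Finset.prod_map]
    simp [Fin.cons_succ]

lemma sum_antidiagonalTuple_succ {N m : ℕ} (F : (Fin (N + 1) → ℕ) → ℝ) :
    ∑ k ∈ Finset.Nat.antidiagonalTuple (N + 1) m, F k
      = ∑ p ∈ Finset.HasAntidiagonal.antidiagonal m,
          ∑ t ∈ Finset.Nat.antidiagonalTuple N p.2, F (Fin.cons p.1 t) := by
  have hsig := Finset.sum_sigma (Finset.HasAntidiagonal.antidiagonal m)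
    (fun p => Finset.Nat.antidiagonalTuple N p.2)
    (fun x : Σ _ : ℕ × ℕ, Fin N → ℕ => F (Fin.cons x.1.1 x.2))
  refine Eq.trans ?_ hsig
  refine Finset.sum_nbij' (i := fun k : Fin (N+1) → ℕ => (⟨(k 0, ∑ j : Fin N, k j.succ), Fin.tail k⟩ : Σ _ : ℕ × ℕ, Fin N → ℕ))
    (j := fun x => Fin.cons x.1.1 x.2) ?_ ?_ ?_ ?_ ?_
  · intro k hk
    rw [Finset.Nat.mem_antidiagonalTuple, Fin.sum_univ_succ] at hk
    simp only [Finset.mem_sigma, Finset.HasAntidiagonal.mem_antidiagonal, Finset.Nat.mem_antidiagonalTuple]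
    exact ⟨hk, rfl⟩
  · intro x hx
    simp only [Finset.mem_sigma, Finset.HasAntidiagonal.mem_antidiagonal,
      Finset.Nat.mem_antidiagonalTuple] at hx
    rw [Finset.Nat.mem_antidiagonalTuple, Fin.sum_univ_succ]
    simp only [Fin.cons_zero, Fin.cons_succ]
    rw [hx.2, hx.1]
  · intro k _
    exact Fin.cons_self_tail k
  · intro x hx
    simp only [Finset.mem_sigma, Finset.HasAntidiagonal.mem_antidiagonal,
      Finset.Nat.mem_antidiagonalTuple] at hx
    simp only [Fin.cons_zero, Fin.cons_succ, Fin.tail_cons]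
    obtain ⟨⟨a, b⟩, t⟩ := x
    simp only at hx ⊢
    congr 1
    simp [hx.2]
  · intro k _
    rw [Fin.cons_self_tail k]

/-- Unrestricted identity. -/
lemma gaussianMoment_multinomial_sum (N : ℕ) (hN : 1 ≤ N) (m : ℕ) :
    ∑ k ∈ Finset.Nat.antidiagonalTuple N m,
        (Nat.multinomial Finset.univ k : ℝ) * ∏ i, gaussianMoment (k i)
      = gaussianMoment m * (N : ℝ) ^ ((m : ℝ) / 2) := by
  induction N, hN using Nat.le_induction generalizing m with
  | base =>
    rw [Finset.Nat.antidiagonalTuple_one, Finset.sum_singleton]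
    have h1 : Nat.multinomial (Finset.univ : Finset (Fin 1)) ![m] = 1 := by
      have : (Finset.univ : Finset (Fin 1)) = {0} := rfl
      rw [this, Nat.multinomial_singleton]
    rw [h1, Fin.prod_univ_one]
    simp [Real.one_rpow]
  | succ N hN ih =>
    rw [sum_antidiagonalTuple_succ]
    have hstep : ∀ p ∈ Finset.HasAntidiagonal.antidiagonal m,
        ∑ t ∈ Finset.Nat.antidiagonalTuple N p.2,
            (Nat.multinomial Finset.univ (Fin.cons p.1 t : Fin (N+1) → ℕ) : ℝ) *
              ∏ i, gaussianMoment ((Fin.cons p.1 t : Fin (N+1) → ℕ) i)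
          = (m.choose p.1 : ℝ) * gaussianMoment p.1 *
              (gaussianMoment p.2 * (N : ℝ) ^ ((p.2 : ℝ) / 2)) := by
      intro p hp
      rw [Finset.HasAntidiagonal.mem_antidiagonal] at hp
      have : ∀ t ∈ Finset.Nat.antidiagonalTuple N p.2,
          (Nat.multinomial Finset.univ (Fin.cons p.1 t : Fin (N+1) → ℕ) : ℝ) *
            ∏ i, gaussianMoment ((Fin.cons p.1 t : Fin (N+1) → ℕ) i)
          = (m.choose p.1 : ℝ) * gaussianMoment p.1 *
              ((Nat.multinomial Finset.univ t : ℝ) * ∏ i, gaussianMoment (t i)) := by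
        intro t ht
        rw [Finset.Nat.mem_antidiagonalTuple] at ht
        rw [multinomial_cons_univ, ht, hp, Fin.prod_univ_succ]
        simp only [Fin.cons_zero, Fin.cons_succ]
        push_cast
        ring
      rw [Finset.sum_congr rfl this, ← Finset.mul_sum, ih]
    rw [Finset.sum_congr rfl hstep, binomial_step N hN m]
    push_cast
    ring

lemma multinomial_single {N : ℕ} (i : Fin N) (m : ℕ) :
    Nat.multinomial Finset.univ (Pi.single i m : Fin N → ℕ) = 1 := by
  unfold Nat.multinomial
  rw [Finset.sum_pi_single' i m, if_pos (Finset.mem_univ i)]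
  rw [Finset.prod_eq_single i (fun j _ hj => by rw [Pi.single_eq_of_ne hj]; rfl)
    (fun h => absurd (Finset.mem_univ i) h), Pi.single_eq_same]
  exact Nat.div_self (Nat.factorial_pos m)

/-- **Restricted multinomial convolution identity for Gaussian moments**: summing only
over tuples all of whose parts are at most `m-1`,
`∑_{k₁+⋯+k_N=m, kᵢ≤m-1} (m choose k₁,…,k_N) g_{k₁}⋯g_{k_N} = g_m · (N^{m/2} - N)`. -/
theorem gaussianMoment_multinomial_sum_restricted
    (N : ℕ) (hN : 1 ≤ N) (m : ℕ) (hm : 1 ≤ m) :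
    ∑ k ∈ (Finset.Nat.antidiagonalTuple N m).filter (fun k => ∀ i, k i ≤ m - 1),
        (Nat.multinomial Finset.univ k : ℝ) * ∏ i, gaussianMoment (k i)
      = gaussianMoment m * ((N : ℝ) ^ ((m : ℝ) / 2) - N) := by
  classical
  set F : (Fin N → ℕ) → ℝ :=
    fun k => (Nat.multinomial Finset.univ k : ℝ) * ∏ i, gaussianMoment (k i) with hF
  have hsplit := Finset.sum_filter_add_sum_filter_not
    (Finset.Nat.antidiagonalTuple N m) (fun k => ∀ i, k i ≤ m - 1) F
  have hbad : (Finset.Nat.antidiagonalTuple N m).filter (fun k => ¬ ∀ i, k i ≤ m - 1)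
      = Finset.univ.image (fun i : Fin N => (Pi.single i m : Fin N → ℕ)) := by
    ext k
    simp only [Finset.mem_filter, Finset.Nat.mem_antidiagonalTuple, Finset.mem_image,
      Finset.mem_univ, true_and]
    constructor
    · rintro ⟨hsum, hbad⟩
      push_neg at hbad
      obtain ⟨i, hi⟩ := hbad
      have hkm : k i = m := by
        have hle : k i ≤ m := hsum ▸ Finset.single_le_sum (fun j _ => Nat.zero_le _)
          (Finset.mem_univ i)
        omega
      refine ⟨i, ?_⟩
      have hrest : ∑ j ∈ Finset.univ.erase i, k j = 0 := by
        have := Finset.add_sum_erase Finset.univ k (Finset.mem_univ i)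
        omega
      funext j
      by_cases hj : j = i
      · subst hj; rw [Pi.single_eq_same, hkm]
      · rw [Pi.single_eq_of_ne hj]
        exact (Finset.sum_eq_zero_iff.mp hrest j (Finset.mem_erase.mpr ⟨hj, Finset.mem_univ j⟩)).symm
    · rintro ⟨i, rfl⟩
      constructor
      · rw [Finset.sum_pi_single' i m, if_pos (Finset.mem_univ i)]
      · intro hall
        have := hall i
        rw [Pi.single_eq_same] at this
        omega
  have hinj : Set.InjOn (fun i : Fin N => (Pi.single i m : Fin N → ℕ))
      (Finset.univ : Finset (Fin N)) := by
    intro i _ j _ hij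
    by_contra hne
    have h1 : (Pi.single i m : Fin N → ℕ) i = m := Pi.single_eq_same (M := fun _ => ℕ) i m
    have h2 : (Pi.single j m : Fin N → ℕ) i = 0 := Pi.single_eq_of_ne (M := fun _ : Fin N => ℕ) hne m
    have h3 : (Pi.single i m : Fin N → ℕ) i = (Pi.single j m : Fin N → ℕ) i :=
      congrFun hij i
    omega
  have hbadsum : ∑ k ∈ (Finset.Nat.antidiagonalTuple N m).filter
      (fun k => ¬ ∀ i, k i ≤ m - 1), F k = N * gaussianMoment m := by
    rw [hbad, Finset.sum_image hinj]
    have : ∀ i : Fin N, F (Pi.single i m) = gaussianMoment m := by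
      intro i
      rw [hF]
      simp only
      rw [multinomial_single, Nat.cast_one, one_mul]
      rw [Finset.prod_eq_single i (fun j _ hj => by
        rw [Pi.single_eq_of_ne hj, gaussianMoment_zero])
        (fun h => absurd (Finset.mem_univ i) h), Pi.single_eq_same]
    rw [Finset.sum_congr rfl fun i _ => this i]
    simp [mul_comm]
  have hfull := gaussianMoment_multinomial_sum N hN m
  rw [hbadsum] at hsplit
  have : ∑ k ∈ (Finset.Nat.antidiagonalTuple N m).filter (fun k => ∀ i, k i ≤ m - 1), F k
      = gaussianMoment m * (N : ℝ) ^ ((m : ℝ) / 2) - N * gaussianMoment m := by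
    rw [← hfull]
    linarith [hsplit]
  rw [hF] at this
  rw [this]
  ring
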